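/- arXiv:1804.10222 — 2 statements merged into one kernel-verified Lean document; each statement's English description precedes it below -/
import Mathlib

section
/- Let a : I → ℝ and b : I → ℝ be continuous on an open interval I ∋ z, with a bounded above and below by positive constants near a finite boundary point e of I, and b bounded near e. Define Λ(x) = ∫_z^x 2b(y)/a(y) dy, s(x) = ∫_z^x e^{−Λ(y)} dy, m(x) = ∫_z^x 2 e^{Λ(y)} / a(y) dy. Then s and m are bounded on a neighborhood of e intersected with I, i.e. the finite boundary e is accessible: the integral u(e) = ∫ over (z,e) of m((z,y)) s(dy) is finite. -/
open Set MeasureTheory intervalIntegral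

theorem stmt14 (l r z : ℝ) (hlz : l < z) (hzr : z < r)
    (a b : ℝ → ℝ)
    (hac : ContinuousOn a (Ioo l r)) (hbc : ContinuousOn b (Ioo l r))
    (abar bbar : ℝ) (habar : 0 < abar)
    (ha : ∀ x ∈ Ico z r, abar⁻¹ ≤ a x ∧ a x ≤ abar)
    (hb : ∀ x ∈ Ico z r, |b x| ≤ bbar)
    (Λ s m : ℝ → ℝ)
    (hΛ : ∀ x : ℝ, Λ x = ∫ y in z..x, 2 * b y / a y)
    (hs : ∀ x : ℝ, s x = ∫ y in z..x, Real.exp (-(Λ y)))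
    (hm : ∀ x : ℝ, m x = ∫ y in z..x, 2 * Real.exp (Λ y) / a y) :
    (∃ M : ℝ, ∀ x ∈ Ico z r, |s x| ≤ M ∧ |m x| ≤ M) ∧
      IntegrableOn (fun y => m y * Real.exp (-(Λ y))) (Ioo z r) := by
  have hrz : (0:ℝ) < r - z := by linarith
  have hbbar : (0:ℝ) ≤ bbar := le_trans (abs_nonneg _) (hb z ⟨le_refl z, hzr⟩)
  have hapos : ∀ x ∈ Ico z r, 0 < a x := fun x hx =>
    lt_of_lt_of_le (inv_pos.2 habar) (ha x hx).1
  -- bound on the integrand of Λ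
  have hfb : ∀ y ∈ Ico z r, |2 * b y / a y| ≤ 2 * bbar * abar := by
    intro y hy
    have hay := hapos y hy
    rw [abs_div, abs_of_pos hay]
    rw [div_le_iff₀ hay]
    have h1 : |2 * b y| ≤ 2 * bbar := by
      rw [abs_mul]
      simp only [abs_two]
      nlinarith [hb y hy]
    have h2 : abar⁻¹ ≤ a y := (ha y hy).1
    calc |2 * b y| ≤ 2 * bbar := h1
      _ = 2 * bbar * abar * abar⁻¹ := by field_simp
      _ ≤ 2 * bbar * abar * a y := by
          apply mul_le_mul_of_nonneg_left h2
          positivity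
  set C : ℝ := 2 * bbar * abar * (r - z) with hC
  have hCpos : 0 ≤ C := by positivity
  -- bound on Λ
  have hΛb : ∀ x ∈ Ico z r, |Λ x| ≤ C := by
    intro x hx
    rw [hΛ x]
    have h := intervalIntegral.norm_integral_le_of_norm_le_const
      (f := fun y => 2 * b y / a y) (a := z) (b := x) (C := 2 * bbar * abar) ?_
    · rw [Real.norm_eq_abs] at h
      refine h.trans ?_
      rw [hC]
      have : |x - z| = x - z := abs_of_nonneg (by linarith [hx.1])
      rw [this]
      nlinarith [hx.1, hx.2]
    · intro y hy
      rw [Set.uIoc_of_le hx.1] at hy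
      exact hfb y ⟨le_of_lt hy.1, lt_of_le_of_lt hy.2 hx.2⟩
  -- bounds on s and m
  have hsb : ∀ x ∈ Ico z r, |s x| ≤ Real.exp C * (r - z) := by
    intro x hx
    rw [hs x]
    have h := intervalIntegral.norm_integral_le_of_norm_le_const
      (f := fun y => Real.exp (-(Λ y))) (a := z) (b := x) (C := Real.exp C) ?_
    · rw [Real.norm_eq_abs] at h
      refine h.trans ?_
      rw [abs_of_nonneg (by linarith [hx.1] : (0:ℝ) ≤ x - z)]
      have := Real.exp_pos C
      nlinarith [hx.1, hx.2]
    · intro y hy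
      rw [Set.uIoc_of_le hx.1] at hy
      have hy' : y ∈ Ico z r := ⟨le_of_lt hy.1, lt_of_le_of_lt hy.2 hx.2⟩
      rw [Real.norm_eq_abs, abs_of_pos (Real.exp_pos _)]
      apply Real.exp_le_exp.2
      have := hΛb y hy'
      rw [abs_le] at this
      linarith [this.1]
  have hmb : ∀ x ∈ Ico z r, |m x| ≤ 2 * Real.exp C * abar * (r - z) := by
    intro x hx
    rw [hm x]
    have h := intervalIntegral.norm_integral_le_of_norm_le_const
      (f := fun y => 2 * Real.exp (Λ y) / a y) (a := z) (b := x)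
      (C := 2 * Real.exp C * abar) ?_
    · rw [Real.norm_eq_abs] at h
      refine h.trans ?_
      rw [abs_of_nonneg (by linarith [hx.1] : (0:ℝ) ≤ x - z)]
      have hx' : x - z ≤ r - z := by linarith [hx.2]
      exact mul_le_mul_of_nonneg_left hx' (by positivity)
    · intro y hy
      rw [Set.uIoc_of_le hx.1] at hy
      have hy' : y ∈ Ico z r := ⟨le_of_lt hy.1, lt_of_le_of_lt hy.2 hx.2⟩
      have hay := hapos y hy'
      rw [Real.norm_eq_abs, abs_div, abs_of_pos hay,
        abs_of_pos (by positivity : (0:ℝ) < 2 * Real.exp (Λ y)), div_le_iff₀ hay]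
      have hEy : Real.exp (Λ y) ≤ Real.exp C := by
        apply Real.exp_le_exp.2
        have := hΛb y hy'
        rw [abs_le] at this
        linarith [this.2]
      have h2 : abar⁻¹ ≤ a y := (ha y hy').1
      calc 2 * Real.exp (Λ y) ≤ 2 * Real.exp C := by linarith
        _ = 2 * Real.exp C * abar * abar⁻¹ := by field_simp
        _ ≤ 2 * Real.exp C * abar * a y := by
            apply mul_le_mul_of_nonneg_left h2
            positivity
  set M : ℝ := max (Real.exp C * (r - z)) (2 * Real.exp C * abar * (r - z)) with hMdef
  have hM : ∀ x ∈ Ico z r, |s x| ≤ M ∧ |m x| ≤ M := fun x hx =>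
    ⟨(hsb x hx).trans (le_max_left _ _), (hmb x hx).trans (le_max_right _ _)⟩
  refine ⟨⟨M, hM⟩, ?_⟩
  -- continuity of Λ and m on Ioo z r
  have hf_cont : ContinuousOn (fun y => 2 * b y / a y) (Ico z r) := by
    have hsub : Ico z r ⊆ Ioo l r := fun y hy => ⟨lt_of_lt_of_le hlz hy.1, hy.2⟩
    exact (continuousOn_const.mul (hbc.mono hsub)).div (hac.mono hsub)
      (fun y hy => (hapos y hy).ne')
  have hΛcontAt : ∀ x ∈ Ioo z r, ContinuousAt Λ x := by
    intro x hx
    set c : ℝ := (x + r) / 2 with hc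
    have hxc : x < c := by rw [hc]; linarith [hx.2]
    have hcr : c < r := by rw [hc]; linarith [hx.2]
    have hzc : z ≤ c := by linarith [hx.1]
    have hIcc : Icc z c ⊆ Ico z r := fun y hy => ⟨hy.1, lt_of_le_of_lt hy.2 hcr⟩
    have hint : IntegrableOn (fun y => 2 * b y / a y) (uIcc z c) := by
      rw [Set.uIcc_of_le hzc]
      exact (hf_cont.mono hIcc).integrableOn_compact isCompact_Icc
    have hcont : ContinuousOn Λ (uIcc z c) := by
      have h2 := intervalIntegral.continuousOn_primitive_interval (a := z) (b := c)
        (f := fun y => 2 * b y / a y) (μ := volume) hint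
      exact h2.congr (fun u _ => hΛ u)
    have hmem : uIcc z c ∈ nhds x := by
      rw [Set.uIcc_of_le hzc]
      exact Icc_mem_nhds hx.1 hxc
    exact hcont.continuousAt hmem
  have hg_cont : ContinuousOn (fun y => 2 * Real.exp (Λ y) / a y) (Ioo z r) := by
    have hsub : Ioo z r ⊆ Ioo l r := fun y hy => ⟨lt_trans hlz hy.1, hy.2⟩
    have hΛc : ContinuousOn Λ (Ioo z r) := fun y hy =>
      (hΛcontAt y hy).continuousWithinAt
    exact (continuousOn_const.mul (Real.continuous_exp.comp_continuousOn hΛc)).div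
      (hac.mono hsub) (fun y hy => (hapos y ⟨le_of_lt hy.1, hy.2⟩).ne')
  have hmcontAt : ∀ x ∈ Ioo z r, ContinuousAt m x := by
    intro x hx
    set c : ℝ := (x + r) / 2 with hc
    have hxc : x < c := by rw [hc]; linarith [hx.2]
    have hcr : c < r := by rw [hc]; linarith [hx.2]
    have hzc : z ≤ c := by linarith [hx.1]
    have hIcc : Icc z c ⊆ Ico z r := fun y hy => ⟨hy.1, lt_of_le_of_lt hy.2 hcr⟩
    -- the integrand is continuous on Icc z c: need continuity of Λ there, incl. at z
    have hΛIcc : ContinuousOn Λ (Icc z c) := by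
      have hint0 : IntegrableOn (fun y => 2 * b y / a y) (uIcc z c) := by
        rw [Set.uIcc_of_le hzc]
        exact (hf_cont.mono hIcc).integrableOn_compact isCompact_Icc
      have h2 := intervalIntegral.continuousOn_primitive_interval (a := z) (b := c)
        (f := fun y => 2 * b y / a y) (μ := volume) hint0
      rw [Set.uIcc_of_le hzc] at h2
      exact h2.congr (fun u _ => hΛ u)
    have hint : IntegrableOn (fun y => 2 * Real.exp (Λ y) / a y) (uIcc z c) := by
      rw [Set.uIcc_of_le hzc]
      have : ContinuousOn (fun y => 2 * Real.exp (Λ y) / a y) (Icc z c) := by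
        have hsub2 : Icc z c ⊆ Ioo l r := fun y hy =>
          ⟨lt_of_lt_of_le hlz hy.1, lt_of_le_of_lt hy.2 hcr⟩
        exact (continuousOn_const.mul
          (Real.continuous_exp.comp_continuousOn hΛIcc)).div (hac.mono hsub2)
          (fun y hy => (hapos y (hIcc hy)).ne')
      exact this.integrableOn_compact isCompact_Icc
    have hcont := intervalIntegral.continuousOn_primitive_interval (a := z) (b := c)
      (f := fun y => 2 * Real.exp (Λ y) / a y) (μ := volume) hint
    have hcont' : ContinuousOn m (uIcc z c) :=
      hcont.congr (fun u _ => hm u)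
    have hmem : uIcc z c ∈ nhds x := by
      rw [Set.uIcc_of_le hzc]
      exact Icc_mem_nhds hx.1 hxc
    exact hcont'.continuousAt hmem
  -- integrability
  have hΛc : ContinuousOn Λ (Ioo z r) := fun y hy => (hΛcontAt y hy).continuousWithinAt
  have hmc : ContinuousOn m (Ioo z r) := fun y hy => (hmcontAt y hy).continuousWithinAt
  have hFc : ContinuousOn (fun y => m y * Real.exp (-(Λ y))) (Ioo z r) :=
    hmc.mul (Real.continuous_exp.comp_continuousOn hΛc.neg)
  refine ⟨hFc.aestronglyMeasurable measurableSet_Ioo, ?_⟩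
  apply HasFiniteIntegral.restrict_of_bounded (C := M * Real.exp C) measure_Ioo_lt_top
  · filter_upwards [ae_restrict_mem measurableSet_Ioo] with y hy
    have hy' : y ∈ Ico z r := ⟨le_of_lt hy.1, hy.2⟩
    rw [Real.norm_eq_abs, abs_mul, abs_of_pos (Real.exp_pos _)]
    have h1 := (hM y hy').2
    have h2 : Real.exp (-(Λ y)) ≤ Real.exp C := by
      apply Real.exp_le_exp.2
      have := hΛb y hy'
      rw [abs_le] at this
      linarith [this.1]
    have hM0 : 0 ≤ M := le_trans (abs_nonneg _) h1
    nlinarith [abs_nonneg (m y), Real.exp_pos (-(Λ y))]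
end

section
/- Let a, b : [z, ∞) → ℝ with a(x) ≤ ā for some ā > 0 and |b(x)| ≤ b̄(1 + |x|), and a bounded below by a positive constant. With Λ(x) = ∫_z^x 2b/a, there is M > 0 with |Λ(y) − Λ(w)| ≤ M |y² − w²| for y, w ≥ z > 0, and the exit integral u(x) = 2 ∫_z^x ∫_z^y e^{Λ(w) − Λ(y)} / a(w) dw dy satisfies u(x) → ∞ as x → ∞; hence +∞ is not an exit boundary. -/
open Set Filter MeasureTheory intervalIntegral

lemma aux15 (z M : ℝ) (h : ℝ → ℝ) (hh : Continuous h)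
    (hbd : ∀ t, z ≤ t → |h t| ≤ 2 * M * t) (w y : ℝ) (hw : z ≤ w) (hwy : w ≤ y) :
    |(∫ t in z..y, h t) - ∫ t in z..w, h t| ≤ M * (y ^ 2 - w ^ 2) := by
  have hint : ∀ p q : ℝ, IntervalIntegrable h volume p q := fun p q => hh.intervalIntegrable p q
  have hsplit : (∫ t in z..y, h t) - ∫ t in z..w, h t = ∫ t in w..y, h t := by
    rw [← intervalIntegral.integral_add_adjacent_intervals (hint z w) (hint w y)]
    ring
  rw [hsplit]
  calc |∫ t in w..y, h t| ≤ ∫ t in w..y, |h t| := by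
        simpa [Real.norm_eq_abs] using
          intervalIntegral.norm_integral_le_integral_norm (f := h) (μ := volume) hwy
    _ ≤ ∫ t in w..y, 2 * M * t := by
        apply intervalIntegral.integral_mono_on hwy (hh.abs.intervalIntegrable w y)
          (by apply Continuous.intervalIntegrable; continuity)
        intro t ht
        exact hbd t (hw.trans ht.1)
    _ = M * (y ^ 2 - w ^ 2) := by
        rw [intervalIntegral.integral_const_mul, integral_id]; ring

theorem stmt15 (z : ℝ) (hz : 0 < z) (a b : ℝ → ℝ)
    (hacont : ContinuousOn a (Ici z)) (hbcont : ContinuousOn b (Ici z))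
    (abar bbar : ℝ) (habar : 0 < abar) (hbbar : 0 < bbar)
    (ha : ∀ x : ℝ, z ≤ x → abar⁻¹ ≤ a x ∧ a x ≤ abar)
    (hb : ∀ x : ℝ, z ≤ x → |b x| ≤ bbar * (1 + |x|))
    (Λ u : ℝ → ℝ)
    (hΛ : ∀ x : ℝ, Λ x = ∫ y in z..x, 2 * b y / a y)
    (hu : ∀ x : ℝ, u x = 2 * ∫ y in z..x, ∫ w in z..y, Real.exp (Λ w - Λ y) / a w) :
    (∃ M > (0 : ℝ), ∀ y w : ℝ, z ≤ y → z ≤ w → |Λ y - Λ w| ≤ M * |y ^ 2 - w ^ 2|) ∧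
      Tendsto u atTop atTop := by
  -- extended coefficients
  set c : ℝ → ℝ := fun x => a (max x z) with hcdef
  set d : ℝ → ℝ := fun x => b (max x z) with hddef
  have hmax : ∀ x : ℝ, z ≤ x → max x z = x := fun x hx => max_eq_left hx
  have hcc : Continuous c :=
    hacont.comp_continuous (continuous_id.max continuous_const) fun x => le_max_right x z
  have hdc : Continuous d :=
    hbcont.comp_continuous (continuous_id.max continuous_const) fun x => le_max_right x z
  have hcb : ∀ x : ℝ, abar⁻¹ ≤ c x ∧ c x ≤ abar := fun x => ha _ (le_max_right x z)
  have hcpos : ∀ x : ℝ, 0 < c x := fun x => lt_of_lt_of_le (inv_pos.2 habar) (hcb x).1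
  have hdb : ∀ x : ℝ, |d x| ≤ bbar * (1 + |max x z|) := fun x => hb _ (le_max_right x z)
  -- the drift/diffusion ratio
  set h : ℝ → ℝ := fun t => 2 * d t / c t with hhdef
  have hhcont : Continuous h := (continuous_const.mul hdc).div hcc fun x => (hcpos x).ne'
  set M : ℝ := abar * bbar * (1 + z⁻¹) with hMdef
  have hM : 0 < M := by positivity
  have hhb : ∀ t, z ≤ t → |h t| ≤ 2 * M * t := by
    intro t ht
    have htpos : 0 < t := hz.trans_le ht
    have h1 : |h t| = 2 * |d t| / c t := by
      rw [hhdef]; rw [abs_div, abs_of_pos (hcpos t), abs_mul]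
      norm_num
    have h2 : |d t| ≤ bbar * (1 + t) := by
      have := hdb t
      rwa [hmax t ht, abs_of_pos htpos] at this
    have h3 : 2 * |d t| / c t ≤ 2 * (bbar * (1 + t)) / abar⁻¹ := by
      apply div_le_div₀ (by positivity) (by linarith) (inv_pos.2 habar) (hcb t).1
    have h4 : 2 * (bbar * (1 + t)) / abar⁻¹ = 2 * abar * bbar * (1 + t) := by
      field_simp
    have h5 : 1 + t ≤ (1 + z⁻¹) * t := by
      have h0 : 1 ≤ z⁻¹ * t := by
        rw [← inv_mul_cancel₀ hz.ne']
        exact mul_le_mul_of_nonneg_left ht (by positivity)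
      nlinarith
    rw [h1]
    calc 2 * |d t| / c t ≤ 2 * abar * bbar * (1 + t) := by rw [← h4]; exact h3
      _ ≤ 2 * abar * bbar * ((1 + z⁻¹) * t) :=
          mul_le_mul_of_nonneg_left h5 (by positivity)
      _ = 2 * M * t := by rw [hMdef]; ring
  -- the smooth version of Λ
  set L : ℝ → ℝ := fun x => ∫ t in z..x, h t with hLdef
  have hLeq : ∀ x, z ≤ x → Λ x = L x := by
    intro x hx
    rw [hΛ, hLdef]
    apply intervalIntegral.integral_congr
    intro t ht
    rw [uIcc_of_le hx] at ht
    have htz : z ≤ t := ht.1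
    simp only [hhdef, hcdef, hddef, hmax t htz]
  have hLbound : ∀ y w : ℝ, z ≤ w → w ≤ y → |L y - L w| ≤ M * (y ^ 2 - w ^ 2) :=
    fun y w hw hwy => aux15 z M h hhcont hhb w y hw hwy
  constructor
  · refine ⟨M, hM, fun y w hy hw => ?_⟩
    rw [hLeq y hy, hLeq w hw]
    rcases le_total w y with hwy | hyw
    · rw [abs_of_nonneg (by nlinarith : (0:ℝ) ≤ y ^ 2 - w ^ 2)]
      exact hLbound y w hw hwy
    · rw [abs_of_nonpos (by nlinarith : y ^ 2 - w ^ 2 ≤ 0), abs_sub_comm]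
      have := hLbound w y hy hyw
      linarith [this]
  · -- Tendsto u atTop atTop
    have hLcont : Continuous L :=
      intervalIntegral.continuous_primitive (fun p q => hhcont.intervalIntegrable p q) z
    set q : ℝ → ℝ := fun w => Real.exp (L w) / c w with hqdef
    have hqcont : Continuous q :=
      (Real.continuous_exp.comp hLcont).div hcc fun x => (hcpos x).ne'
    have hqpos : ∀ w, 0 < q w := fun w => div_pos (Real.exp_pos _) (hcpos w)
    set G : ℝ → ℝ := fun y => ∫ w in z..y, q w with hGdef
    have hGcont : Continuous G :=
      intervalIntegral.continuous_primitive (fun p r => hqcont.intervalIntegrable p r) z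
    set F : ℝ → ℝ := fun y => Real.exp (-L y) * G y with hFdef
    have hFcont : Continuous F := (Real.continuous_exp.comp hLcont.neg).mul hGcont
    have hGnn : ∀ y, z ≤ y → 0 ≤ G y := fun y hy =>
      intervalIntegral.integral_nonneg hy fun w _ => (hqpos w).le
    have hFnn : ∀ y, z ≤ y → 0 ≤ F y := fun y hy =>
      mul_nonneg (Real.exp_pos _).le (hGnn y hy)
    have hueq : ∀ x, z ≤ x → u x = 2 * ∫ y in z..x, F y := by
      intro x hx
      rw [hu]
      congr 1
      apply intervalIntegral.integral_congr
      intro y hy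
      rw [uIcc_of_le hx] at hy
      have hzy : z ≤ y := hy.1
      have heq : ∀ w ∈ uIcc z y, Real.exp (Λ w - Λ y) / a w = Real.exp (-L y) * q w := by
        intro w hw
        rw [uIcc_of_le hzy] at hw
        have hzw : z ≤ w := hw.1
        have hca : a w = c w := by rw [hcdef]; simp only [hmax w hzw]
        rw [hLeq w hzw, hLeq y hzy, hqdef, hca,
          show L w - L y = -L y + L w by ring, Real.exp_add]
        ring
      calc (∫ w in z..y, Real.exp (Λ w - Λ y) / a w)
          = ∫ w in z..y, Real.exp (-L y) * q w := intervalIntegral.integral_congr heq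
        _ = Real.exp (-L y) * G y := intervalIntegral.integral_const_mul _ _
    set y0 : ℝ := max (z + 1) 1 with hy0def
    have hy0z : z + 1 ≤ y0 := le_max_left _ _
    have hy01 : (1 : ℝ) ≤ y0 := le_max_right _ _
    have hy0pos : 0 < y0 := lt_of_lt_of_le one_pos hy01
    have hzy0 : z ≤ y0 := by linarith
    set c0 : ℝ := Real.exp (-(2 * M)) / abar with hc0
    have hc0pos : 0 < c0 := by positivity
    have hFlow : ∀ y, y0 ≤ y → c0 / y ≤ F y := by
      intro y hy
      have hy1 : (1 : ℝ) ≤ y := hy01.trans hy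
      have hypos : (0 : ℝ) < y := lt_of_lt_of_le one_pos hy1
      have hinvy : 1 / y ≤ 1 := by rw [div_le_one hypos]; exact hy1
      have hinvpos : 0 < 1 / y := by positivity
      have hwz : z ≤ y - 1 / y := by
        have hzy1 : z + 1 ≤ y := hy0z.trans hy
        linarith
      have hzy : z ≤ y := by linarith
      have hq : ∀ w ∈ Icc (y - 1 / y) y,
          Real.exp (L y) * Real.exp (-(2 * M)) / abar ≤ q w := by
        intro w hw
        have hzw : z ≤ w := hwz.trans hw.1
        have hwpos : 0 < w := hz.trans_le hzw
        have hLb : |L y - L w| ≤ M * (y ^ 2 - w ^ 2) := hLbound y w hzw hw.2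
        have hsq : y ^ 2 - w ^ 2 ≤ 2 := by
          have h1 : y - w ≤ 1 / y := by linarith [hw.1]
          have h2 : 0 ≤ y - w := by linarith [hw.2]
          have h3 : y + w ≤ 2 * y := by linarith [hw.2]
          have h4 : 0 ≤ y + w := by linarith
          have h5 : (y - w) * (y + w) ≤ (1 / y) * (2 * y) := by
            exact mul_le_mul h1 h3 h4 hinvpos.le
          have h6 : (1 / y) * (2 * y) = 2 := by field_simp
          nlinarith
        have hLw : L y - 2 * M ≤ L w := by
          have h6 : L y - L w ≤ M * (y ^ 2 - w ^ 2) := (le_abs_self _).trans hLb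
          nlinarith
        calc Real.exp (L y) * Real.exp (-(2 * M)) / abar
            = Real.exp (L y - 2 * M) / abar := by
              rw [show L y - 2 * M = L y + -(2 * M) by ring, Real.exp_add]
          _ ≤ Real.exp (L w) / abar :=
              div_le_div_of_nonneg_right (Real.exp_le_exp.2 hLw) habar.le
          _ ≤ Real.exp (L w) / c w :=
              div_le_div_of_nonneg_left (Real.exp_pos _).le (hcpos w) (hcb w).2
      have hsplitG : G y = (∫ w in z..(y - 1 / y), q w) + ∫ w in (y - 1 / y)..y, q w :=
        (intervalIntegral.integral_add_adjacent_intervals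
          (hqcont.intervalIntegrable _ _) (hqcont.intervalIntegrable _ _)).symm
      have h7 : (1 / y) * (Real.exp (L y) * Real.exp (-(2 * M)) / abar)
          ≤ ∫ w in (y - 1 / y)..y, q w := by
        have hmono := intervalIntegral.integral_mono_on (by linarith : y - 1 / y ≤ y)
          (intervalIntegrable_const (μ := volume)) (hqcont.intervalIntegrable _ _) hq
        rwa [intervalIntegral.integral_const, smul_eq_mul,
          show y - (y - 1 / y) = 1 / y by ring] at hmono
      have h8 : 0 ≤ ∫ w in z..(y - 1 / y), q w :=
        intervalIntegral.integral_nonneg hwz fun w _ => (hqpos w).le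
      have hG7 : (1 / y) * (Real.exp (L y) * Real.exp (-(2 * M)) / abar) ≤ G y := by
        rw [hsplitG]; linarith
      have e1 : Real.exp (-L y) * Real.exp (L y) = 1 := by
        rw [← Real.exp_add, neg_add_cancel, Real.exp_zero]
      have key : Real.exp (-L y) * ((1 / y) * (Real.exp (L y) * Real.exp (-(2 * M)) / abar))
          = c0 / y := by
        calc Real.exp (-L y) * ((1 / y) * (Real.exp (L y) * Real.exp (-(2 * M)) / abar))
            = (Real.exp (-L y) * Real.exp (L y)) * (Real.exp (-(2 * M)) / (abar * y)) := by
              ring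
          _ = Real.exp (-(2 * M)) / (abar * y) := by rw [e1, one_mul]
          _ = c0 / y := by rw [hc0, div_div]
      calc c0 / y
          = Real.exp (-L y) * ((1 / y) * (Real.exp (L y) * Real.exp (-(2 * M)) / abar)) :=
            key.symm
        _ ≤ Real.exp (-L y) * G y := mul_le_mul_of_nonneg_left hG7 (Real.exp_pos _).le
        _ = F y := rfl
    have hmain : ∀ x, y0 ≤ x → 2 * c0 * Real.log (x / y0) ≤ u x := by
      intro x hx
      have hzx : z ≤ x := hzy0.trans hx
      rw [hueq x hzx]
      have hsplit : (∫ y in z..x, F y) = (∫ y in z..y0, F y) + ∫ y in y0..x, F y :=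
        (intervalIntegral.integral_add_adjacent_intervals
          (hFcont.intervalIntegrable _ _) (hFcont.intervalIntegrable _ _)).symm
      have h9 : 0 ≤ ∫ y in z..y0, F y :=
        intervalIntegral.integral_nonneg hzy0 fun y hy => hFnn y hy.1
      have hcont : ContinuousOn (fun y : ℝ => c0 / y) (uIcc y0 x) := by
        apply ContinuousOn.div continuousOn_const continuousOn_id
        intro t ht
        rw [uIcc_of_le hx] at ht
        exact (lt_of_lt_of_le hy0pos ht.1).ne'
      have h10 : c0 * Real.log (x / y0) ≤ ∫ y in y0..x, F y := by
        have hmono := intervalIntegral.integral_mono_on hx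
          (hcont.intervalIntegrable (μ := volume)) (hFcont.intervalIntegrable _ _)
          (fun t ht => hFlow t ht.1)
        have hval : (∫ y in y0..x, c0 / y) = c0 * Real.log (x / y0) := by
          simp_rw [div_eq_mul_one_div c0]
          rw [intervalIntegral.integral_const_mul, integral_one_div]
          intro h0
          rw [uIcc_of_le hx] at h0
          exact absurd h0.1 (by linarith)
        rw [← hval]
        exact hmono
      rw [hsplit]
      linarith
    have hev : ∀ᶠ x in atTop, 2 * c0 * Real.log (x / y0) ≤ u x :=
      eventually_atTop.2 ⟨y0, hmain⟩
    apply tendsto_atTop_mono' atTop hev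
    have hdiv : Tendsto (fun x : ℝ => x / y0) atTop atTop :=
      tendsto_id.atTop_div_const hy0pos
    exact (Real.tendsto_log_atTop.comp hdiv).const_mul_atTop (by positivity)
end
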